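/- Let E : (0,∞) × [0,∞) → (0,∞) be two C¹ solutions E₁, E₂ of the PDE α (∂E/∂t)/(Δ+E)² = −∂E/∂Δ with ∂Eᵢ/∂t ≠ 0 everywhere, sharing the same initial data E₁(Δ,0) = E₂(Δ,0) for all Δ > 0. Suppose every point (Δ,t) in the domain lies on a characteristic curve Δ(s) = α/(α/(δ+E(δ,0)) − s) − E(δ,0) emanating from some δ = Δ(0) > 0 at s = 0. Then E₁ ≡ E₂ on the domain. -/

import Mathlib

open Set Filter Topology

/-- One-sided derivative sign at a right endpoint of an interval on which the
endpoint value is maximal. -/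
lemma aux_deriv_nonneg_of_max_left {f : ℝ → ℝ} {f' a b : ℝ} (hab : a < b)
    (hd : HasDerivAt f f' b) (hmax : ∀ t, a ≤ t → t < b → f t ≤ f b) : 0 ≤ f' := by
  have h := hasDerivAt_iff_tendsto_slope.1 hd
  have h' : Tendsto (slope f b) (𝓝[<] b) (𝓝 f') :=
    h.mono_left (nhdsWithin_mono b (fun x hx => ne_of_lt hx))
  refine ge_of_tendsto h' ?_
  filter_upwards [Ioo_mem_nhdsLT hab] with t ht
  rw [slope_def_field]
  refine div_nonneg_iff.2 (Or.inr ⟨?_, ?_⟩)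
  · exact sub_nonpos.2 (hmax t ht.1.le ht.2)
  · exact sub_nonpos.2 ht.2.le

/-- Bundle of hypotheses for one solution of the PDE. -/
structure PDESol (α : ℝ) (E Et ED : ℝ → ℝ → ℝ) : Prop where
  pos : ∀ Δ t, 0 < Δ → 0 ≤ t → 0 < E Δ t
  dt : ∀ Δ t, 0 < Δ → 0 ≤ t → HasDerivAt (fun s => E Δ s) (Et Δ t) t
  dD : ∀ Δ t, 0 < Δ → 0 ≤ t → HasDerivAt (fun d => E d t) (ED Δ t) Δ
  pde : ∀ Δ t, 0 < Δ → 0 ≤ t → α * Et Δ t / (Δ + E Δ t) ^ 2 = - ED Δ t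
  tne : ∀ Δ t, 0 < Δ → 0 ≤ t → Et Δ t ≠ 0

namespace PDESol

variable {α : ℝ} {E Et ED : ℝ → ℝ → ℝ}

lemma ED_eq (hα : 0 < α) (S : PDESol α E Et ED) {Δ t : ℝ} (hΔ : 0 < Δ) (ht : 0 ≤ t) :
    ED Δ t = α * (-Et Δ t) / (Δ + E Δ t) ^ 2 := by
  have h := S.pde Δ t hΔ ht
  have hP : (0:ℝ) < (Δ + E Δ t) ^ 2 := by
    have := S.pos Δ t hΔ ht; positivity
  field_simp at h ⊢
  linarith

lemma ED_pos_of_Et_neg (hα : 0 < α) (S : PDESol α E Et ED) {Δ t : ℝ}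
    (hΔ : 0 < Δ) (ht : 0 ≤ t) (hEt : Et Δ t < 0) : 0 < ED Δ t := by
  rw [S.ED_eq hα hΔ ht]
  have hP : (0:ℝ) < (Δ + E Δ t) ^ 2 := by
    have := S.pos Δ t hΔ ht; positivity
  have : 0 < α * (-Et Δ t) := by nlinarith
  positivity

lemma ED_neg_of_Et_pos (hα : 0 < α) (S : PDESol α E Et ED) {Δ t : ℝ}
    (hΔ : 0 < Δ) (ht : 0 ≤ t) (hEt : 0 < Et Δ t) : ED Δ t < 0 := by
  rw [S.ED_eq hα hΔ ht]
  have hP : (0:ℝ) < (Δ + E Δ t) ^ 2 := by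
    have := S.pos Δ t hΔ ht; positivity
  have h1 : α * (-Et Δ t) < 0 := by nlinarith
  exact div_neg_of_neg_of_pos h1 hP

lemma Et_neg_of_ED_pos (hα : 0 < α) (S : PDESol α E Et ED) {Δ t : ℝ}
    (hΔ : 0 < Δ) (ht : 0 ≤ t) (hED : 0 < ED Δ t) : Et Δ t < 0 := by
  rcases lt_trichotomy (Et Δ t) 0 with h | h | h
  · exact h
  · exact absurd h (S.tne Δ t hΔ ht)
  · exact absurd hED (not_lt.2 (S.ED_neg_of_Et_pos hα hΔ ht h).le)

lemma Et_pos_of_ED_neg (hα : 0 < α) (S : PDESol α E Et ED) {Δ t : ℝ}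
    (hΔ : 0 < Δ) (ht : 0 ≤ t) (hED : ED Δ t < 0) : 0 < Et Δ t := by
  rcases lt_trichotomy (Et Δ t) 0 with h | h | h
  · exact absurd hED (not_lt.2 (S.ED_pos_of_Et_neg hα hΔ ht h).le)
  · exact absurd h (S.tne Δ t hΔ ht)
  · exact h

lemma ED_ne (hα : 0 < α) (S : PDESol α E Et ED) {Δ t : ℝ}
    (hΔ : 0 < Δ) (ht : 0 ≤ t) : ED Δ t ≠ 0 := by
  rcases lt_trichotomy (Et Δ t) 0 with h | h | h
  · exact ne_of_gt (S.ED_pos_of_Et_neg hα hΔ ht h)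
  · exact absurd h (S.tne Δ t hΔ ht)
  · exact ne_of_lt (S.ED_neg_of_Et_pos hα hΔ ht h)

/-- Dichotomy of the sign of `Et Δ ·` on `[0, ∞)` for a fixed `Δ`. -/
lemma t_dichot (S : PDESol α E Et ED) {Δ : ℝ} (hΔ : 0 < Δ) :
    (∀ t, 0 ≤ t → Et Δ t < 0) ∨ (∀ t, 0 ≤ t → 0 < Et Δ t) := by
  have h := hasDerivWithinAt_forall_lt_or_forall_gt_of_forall_ne (convex_Ici (0:ℝ))
    (f := fun s => E Δ s) (f' := fun t => Et Δ t)
    (fun t ht => (S.dt Δ t hΔ ht).hasDerivWithinAt) (m := 0)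
    (fun t ht => S.tne Δ t hΔ ht)
  rcases h with h | h
  · exact Or.inl (fun t ht => h t ht)
  · exact Or.inr (fun t ht => h t ht)

/-- Dichotomy of the sign of `ED · t` on `(0, ∞)` for a fixed `t`. -/
lemma D_dichot (hα : 0 < α) (S : PDESol α E Et ED) {t : ℝ} (ht : 0 ≤ t) :
    (∀ Δ, 0 < Δ → ED Δ t < 0) ∨ (∀ Δ, 0 < Δ → 0 < ED Δ t) := by
  have h := hasDerivWithinAt_forall_lt_or_forall_gt_of_forall_ne (convex_Ioi (0:ℝ))
    (f := fun d => E d t) (f' := fun Δ => ED Δ t)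
    (fun Δ hΔ => (S.dD Δ t hΔ ht).hasDerivWithinAt) (m := 0)
    (fun Δ hΔ => S.ED_ne hα hΔ ht)
  rcases h with h | h
  · exact Or.inl (fun Δ hΔ => h Δ hΔ)
  · exact Or.inr (fun Δ hΔ => h Δ hΔ)

/-- Global dichotomy: `Et` is everywhere negative or everywhere positive on the domain. -/
lemma global_dichot (hα : 0 < α) (S : PDESol α E Et ED) :
    (∀ Δ t, 0 < Δ → 0 ≤ t → Et Δ t < 0) ∨ (∀ Δ t, 0 < Δ → 0 ≤ t → 0 < Et Δ t) := by
  rcases S.t_dichot one_pos with h1 | h1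
  · left
    intro Δ t hΔ ht
    have h10 : Et 1 0 < 0 := h1 0 le_rfl
    have hED10 : 0 < ED 1 0 := S.ED_pos_of_Et_neg hα one_pos le_rfl h10
    have hD : ∀ Δ', 0 < Δ' → 0 < ED Δ' 0 := by
      rcases S.D_dichot hα (le_refl (0:ℝ)) with h | h
      · exact absurd hED10 (not_lt.2 (h 1 one_pos).le)
      · exact h
    have hEt0 : Et Δ 0 < 0 := S.Et_neg_of_ED_pos hα hΔ le_rfl (hD Δ hΔ)
    rcases S.t_dichot hΔ with h | h
    · exact h t ht
    · exact absurd hEt0 (not_lt.2 (h 0 le_rfl).le)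
  · right
    intro Δ t hΔ ht
    have h10 : 0 < Et 1 0 := h1 0 le_rfl
    have hED10 : ED 1 0 < 0 := S.ED_neg_of_Et_pos hα one_pos le_rfl h10
    have hD : ∀ Δ', 0 < Δ' → ED Δ' 0 < 0 := by
      rcases S.D_dichot hα (le_refl (0:ℝ)) with h | h
      · exact h
      · exact absurd hED10 (not_lt.2 (h 1 one_pos).le)
    have hEt0 : 0 < Et Δ 0 := S.Et_pos_of_ED_neg hα hΔ le_rfl (hD Δ hΔ)
    rcases S.t_dichot hΔ with h | h
    · exact absurd hEt0 (not_lt.2 (h 0 le_rfl).le)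
    · exact h t ht

/-- If `Et < 0` everywhere then each `E Δ ·` is strictly decreasing on `[0, ∞)`. -/
lemma strictAnti_t (S : PDESol α E Et ED)
    (hneg : ∀ Δ t, 0 < Δ → 0 ≤ t → Et Δ t < 0) {Δ : ℝ} (hΔ : 0 < Δ) :
    StrictAntiOn (fun t => E Δ t) (Ici 0) := by
  apply strictAntiOn_of_deriv_neg (convex_Ici 0)
  · exact fun t ht => (S.dt Δ t hΔ ht).continuousAt.continuousWithinAt
  · intro t ht
    rw [interior_Ici] at ht
    rw [(S.dt Δ t hΔ ht.le).deriv]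
    exact hneg Δ t hΔ ht.le

/-- If `ED > 0` on a time slice then `E · t` is strictly increasing on `(0, ∞)`. -/
lemma strictMono_D (S : PDESol α E Et ED) {t : ℝ} (ht : 0 ≤ t)
    (hpos : ∀ Δ, 0 < Δ → 0 < ED Δ t) :
    StrictMonoOn (fun d => E d t) (Ioi 0) := by
  apply strictMonoOn_of_deriv_pos (convex_Ioi 0)
  · exact fun d hd => (S.dD d t hd ht).continuousAt.continuousWithinAt
  · intro d hd
    rw [interior_Ioi] at hd
    rw [(S.dD d t hd ht).deriv]
    exact hpos d hd

/-- If `ED < 0` on a time slice then `E · t` is strictly decreasing on `(0, ∞)`. -/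
lemma strictAnti_D (S : PDESol α E Et ED) {t : ℝ} (ht : 0 ≤ t)
    (hneg : ∀ Δ, 0 < Δ → ED Δ t < 0) :
    StrictAntiOn (fun d => E d t) (Ioi 0) := by
  apply strictAntiOn_of_deriv_neg (convex_Ioi 0)
  · exact fun d hd => (S.dD d t hd ht).continuousAt.continuousWithinAt
  · intro d hd
    rw [interior_Ioi] at hd
    rw [(S.dD d t hd ht).deriv]
    exact hneg d hd

/-- Joint continuity of `E` on `(0,∞) × [0,∞)` from separate continuity and
monotonicity in the first variable. -/
lemma jointCont (S : PDESol α E Et ED)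
    (hmono : ∀ t, 0 ≤ t → StrictMonoOn (fun d => E d t) (Ioi 0)) :
    ContinuousOn (fun p : ℝ × ℝ => E p.1 p.2) (Ioi 0 ×ˢ Ici 0) := by
  rintro ⟨x₀, t₀⟩ hp₀
  obtain ⟨hx₀, ht₀⟩ := hp₀
  simp only [mem_Ioi] at hx₀
  simp only [mem_Ici] at ht₀
  rw [Metric.continuousWithinAt_iff]
  intro ε hε
  -- continuity in the Δ variable at (x₀, t₀)
  obtain ⟨h₁, h₁pos, H₁⟩ := Metric.continuousAt_iff.1 (S.dD x₀ t₀ hx₀ ht₀).continuousAt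
    (ε/4) (by positivity)
  set h : ℝ := min (h₁/2) (x₀/2) with hh
  have hhpos : 0 < h := by positivity
  have hxp : 0 < x₀ + h := by positivity
  have hxm : 0 < x₀ - h := by
    have : h ≤ x₀ / 2 := min_le_right _ _
    linarith
  have hub : dist (E (x₀ + h) t₀) (E x₀ t₀) < ε/4 := by
    apply H₁
    rw [Real.dist_eq]
    have : h ≤ h₁ / 2 := min_le_left _ _
    rw [abs_of_pos (by linarith : (0:ℝ) < x₀ + h - x₀)]
    linarith
  have hlb : dist (E (x₀ - h) t₀) (E x₀ t₀) < ε/4 := by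
    apply H₁
    rw [Real.dist_eq]
    have : h ≤ h₁ / 2 := min_le_left _ _
    rw [abs_of_neg (by linarith : x₀ - h - x₀ < 0)]
    linarith
  -- continuity in the t variable at the two shifted lines
  obtain ⟨δ₁, δ₁pos, Hδ₁⟩ := Metric.continuousAt_iff.1 (S.dt (x₀+h) t₀ hxp ht₀).continuousAt
    (ε/4) (by positivity)
  obtain ⟨δ₂, δ₂pos, Hδ₂⟩ := Metric.continuousAt_iff.1 (S.dt (x₀-h) t₀ hxm ht₀).continuousAt
    (ε/4) (by positivity)
  refine ⟨min h (min δ₁ δ₂), by positivity, ?_⟩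
  rintro ⟨x, t⟩ hxt hdist
  obtain ⟨hx, ht⟩ := hxt
  simp only [mem_Ioi] at hx
  simp only [mem_Ici] at ht
  rw [Prod.dist_eq, max_lt_iff] at hdist
  obtain ⟨hdx, hdt⟩ := hdist
  simp only [Real.dist_eq] at hdx hdt
  have hxlt : x < x₀ + h := by
    have := abs_lt.1 hdx
    have h2 : |x - x₀| < h := lt_of_lt_of_le (by exact hdx.trans_le (min_le_left _ _)) le_rfl
    have := abs_lt.1 h2
    linarith [this.2]
  have hxgt : x₀ - h < x := by
    have h2 : |x - x₀| < h := hdx.trans_le (min_le_left _ _)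
    have := abs_lt.1 h2
    linarith [this.1]
  have hdt₁ : dist (E (x₀+h) t) (E (x₀+h) t₀) < ε/4 := by
    apply Hδ₁
    rw [Real.dist_eq]
    exact hdt.trans_le ((min_le_right _ _).trans (min_le_left _ _))
  have hdt₂ : dist (E (x₀-h) t) (E (x₀-h) t₀) < ε/4 := by
    apply Hδ₂
    rw [Real.dist_eq]
    exact hdt.trans_le ((min_le_right _ _).trans (min_le_right _ _))
  -- monotone sandwich
  have hup : E x t < E (x₀ + h) t := hmono t ht (mem_Ioi.2 hx) (mem_Ioi.2 hxp) hxlt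
  have hdown : E (x₀ - h) t < E x t := hmono t ht (mem_Ioi.2 hxm) (mem_Ioi.2 hx) hxgt
  rw [Real.dist_eq] at hub hlb hdt₁ hdt₂ ⊢
  have u1 := abs_lt.1 hub
  have u2 := abs_lt.1 hlb
  have u3 := abs_lt.1 hdt₁
  have u4 := abs_lt.1 hdt₂
  rw [abs_lt]
  constructor <;> nlinarith [u1.1, u1.2, u2.1, u2.2, u3.1, u3.2, u4.1, u4.2]

end PDESol

/-- The covering hypothesis yields initial points with arbitrarily small `d + E d 0`. -/
lemma aux_cover_small (α : ℝ) (E₁ : ℝ → ℝ → ℝ) (hα : 0 < α)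
    (hpos : ∀ d, 0 < d → 0 < E₁ d 0)
    (hcover : ∀ Δ t, 0 < Δ → 0 ≤ t → ∃ d : ℝ, 0 < d ∧
      (∀ s ∈ Set.Icc 0 t,
        s < α / (d + E₁ d 0) ∧
        0 < α / (α / (d + E₁ d 0) - s) - E₁ d 0) ∧
      Δ = α / (α / (d + E₁ d 0) - t) - E₁ d 0) :
    ∀ μ : ℝ, 0 < μ → ∃ d, 0 < d ∧ d + E₁ d 0 < μ := by
  intro μ hμ
  set T : ℝ := α / μ + 1 with hT
  have hTpos : 0 < T := by positivity
  obtain ⟨d, hd, hcond, -⟩ := hcover 1 T one_pos hTpos.le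
  have h1 : T < α / (d + E₁ d 0) := (hcond T ⟨hTpos.le, le_refl T⟩).1
  have hX : 0 < d + E₁ d 0 := by have := hpos d hd; linarith
  refine ⟨d, hd, ?_⟩
  have h2 : T * (d + E₁ d 0) < α := (lt_div_iff₀ hX).1 h1
  have h3 : μ * T = α + μ := by
    rw [hT, mul_add, mul_one, mul_div_assoc', mul_div_right_comm, div_self hμ.ne', one_mul]
  have h4 : (d + E₁ d 0) * T < μ * T := by nlinarith
  exact lt_of_mul_lt_mul_right h4 hTpos.le

/-- Core one-sided comparison: `E₁ ≤ E₂` on the domain. -/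
lemma aux_core (α : ℝ) (E₁ E₂ Et₁ ED₁ Et₂ ED₂ : ℝ → ℝ → ℝ) (hα : 0 < α)
    (S₁ : PDESol α E₁ Et₁ ED₁) (S₂ : PDESol α E₂ Et₂ ED₂)
    (hinit : ∀ Δ : ℝ, 0 < Δ → E₁ Δ 0 = E₂ Δ 0)
    (hcov : ∀ μ : ℝ, 0 < μ → ∃ d, 0 < d ∧ d + E₁ d 0 < μ) :
    ∀ Δ t, 0 < Δ → 0 ≤ t → E₁ Δ t ≤ E₂ Δ t := by
  -- Step 1: global signs for solution 1
  have hEt₁neg : ∀ Δ t, 0 < Δ → 0 ≤ t → Et₁ Δ t < 0 := by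
    rcases S₁.global_dichot hα with h | h
    · exact h
    · exfalso
      have hED : ∀ Δ, 0 < Δ → ED₁ Δ 0 < 0 :=
        fun Δ hΔ => S₁.ED_neg_of_Et_pos hα hΔ le_rfl (h Δ 0 hΔ le_rfl)
      have hanti : StrictAntiOn (fun d => E₁ d 0) (Ioi 0) :=
        S₁.strictAnti_D le_rfl hED
      obtain ⟨d, hd, hsmall⟩ := hcov (min 1 (E₁ 1 0))
        (lt_min one_pos (S₁.pos 1 0 one_pos le_rfl))
      have hd1 : d < 1 := by
        have h1 : d + E₁ d 0 < 1 := lt_of_lt_of_le hsmall (min_le_left _ _)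
        have := S₁.pos d 0 hd le_rfl
        linarith
      have h2 : E₁ d 0 < E₁ 1 0 := by
        have h1 : d + E₁ d 0 < E₁ 1 0 := lt_of_lt_of_le hsmall (min_le_right _ _)
        linarith
      have h3 : E₁ 1 0 < E₁ d 0 := hanti (mem_Ioi.2 hd) (mem_Ioi.2 one_pos) hd1
      linarith
  have hED₁pos : ∀ Δ t, 0 < Δ → 0 ≤ t → 0 < ED₁ Δ t :=
    fun Δ t hΔ ht => S₁.ED_pos_of_Et_neg hα hΔ ht (hEt₁neg Δ t hΔ ht)
  -- Step 2: global signs for solution 2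
  have hEt₂neg : ∀ Δ t, 0 < Δ → 0 ≤ t → Et₂ Δ t < 0 := by
    rcases S₂.global_dichot hα with h | h
    · exact h
    · exfalso
      have hED : ∀ Δ, 0 < Δ → ED₂ Δ 0 < 0 :=
        fun Δ hΔ => S₂.ED_neg_of_Et_pos hα hΔ le_rfl (h Δ 0 hΔ le_rfl)
      have hanti : StrictAntiOn (fun d => E₂ d 0) (Ioi 0) :=
        S₂.strictAnti_D le_rfl hED
      have hmono : StrictMonoOn (fun d => E₁ d 0) (Ioi 0) :=
        S₁.strictMono_D le_rfl (fun Δ hΔ => hED₁pos Δ 0 hΔ le_rfl)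
      have h1 : E₁ 1 0 < E₁ 2 0 := hmono (mem_Ioi.2 one_pos) (mem_Ioi.2 two_pos) one_lt_two
      have h2 : E₂ 2 0 < E₂ 1 0 := hanti (mem_Ioi.2 one_pos) (mem_Ioi.2 two_pos) one_lt_two
      rw [← hinit 1 one_pos, ← hinit 2 two_pos] at h2
      linarith
  have hED₂pos : ∀ Δ t, 0 < Δ → 0 ≤ t → 0 < ED₂ Δ t :=
    fun Δ t hΔ ht => S₂.ED_pos_of_Et_neg hα hΔ ht (hEt₂neg Δ t hΔ ht)
  -- monotone structure
  have hmono₁ : ∀ t, 0 ≤ t → StrictMonoOn (fun d => E₁ d t) (Ioi 0) :=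
    fun t ht => S₁.strictMono_D ht (fun Δ hΔ => hED₁pos Δ t hΔ ht)
  have hmono₂ : ∀ t, 0 ≤ t → StrictMonoOn (fun d => E₂ d t) (Ioi 0) :=
    fun t ht => S₂.strictMono_D ht (fun Δ hΔ => hED₂pos Δ t hΔ ht)
  have hanti₁ : ∀ Δ, 0 < Δ → StrictAntiOn (fun t => E₁ Δ t) (Ici 0) :=
    fun Δ hΔ => S₁.strictAnti_t hEt₁neg hΔ
  -- joint continuity of the difference
  have hcont : ContinuousOn (fun p : ℝ × ℝ => E₁ p.1 p.2 - E₂ p.1 p.2) (Ioi 0 ×ˢ Ici 0) :=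
    (S₁.jointCont hmono₁).sub (S₂.jointCont hmono₂)
  -- main argument
  intro Δ₀ t₀ hΔ₀ ht₀
  have key : ∀ ε : ℝ, 0 < ε → E₁ Δ₀ t₀ - E₂ Δ₀ t₀ ≤ ε := by
    intro ε hε
    obtain ⟨d, hd, hsmall⟩ := hcov (min ε Δ₀) (lt_min hε hΔ₀)
    have hE₁d0 : 0 < E₁ d 0 := S₁.pos d 0 hd le_rfl
    have hdΔ₀ : d < Δ₀ := by
      have : d + E₁ d 0 < Δ₀ := lt_of_lt_of_le hsmall (min_le_right _ _)
      linarith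
    have hE0ε : E₁ d 0 < ε := by
      have : d + E₁ d 0 < ε := lt_of_lt_of_le hsmall (min_le_left _ _)
      linarith
    by_contra hcon
    push_neg at hcon
    -- compact rectangle
    set R : Set (ℝ × ℝ) := Icc d Δ₀ ×ˢ Icc 0 t₀ with hR
    have hRsub : R ⊆ Ioi 0 ×ˢ Ici 0 := by
      rintro ⟨x, t⟩ ⟨hx, ht⟩
      exact ⟨mem_Ioi.2 (lt_of_lt_of_le hd hx.1), mem_Ici.2 ht.1⟩
    have hRcomp : IsCompact R := isCompact_Icc.prod isCompact_Icc
    have hmemΔ₀ : (⟨Δ₀, t₀⟩ : ℝ × ℝ) ∈ R := ⟨⟨hdΔ₀.le, le_refl _⟩, ⟨ht₀, le_refl _⟩⟩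
    obtain ⟨⟨Db, tb⟩, hpb, hmax⟩ :=
      hRcomp.exists_isMaxOn ⟨_, hmemΔ₀⟩ (hcont.mono hRsub)
    obtain ⟨hDbmem, htbmem⟩ := hpb
    have hDb1 : d ≤ Db := hDbmem.1
    have hDb2 : Db ≤ Δ₀ := hDbmem.2
    have htb1 : 0 ≤ tb := htbmem.1
    have htb2 : tb ≤ t₀ := htbmem.2
    have hDbpos : 0 < Db := lt_of_lt_of_le hd hDb1
    have hm : E₁ Δ₀ t₀ - E₂ Δ₀ t₀ ≤ E₁ Db tb - E₂ Db tb := hmax hmemΔ₀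
    have hmpos : 0 < E₁ Db tb - E₂ Db tb := lt_of_lt_of_le (lt_of_lt_of_le hε hcon.le) hm
    -- the maximizer is not on the bottom edge
    have htbpos : 0 < tb := by
      rcases eq_or_lt_of_le htb1 with h | h
      · exfalso
        rw [← h] at hmpos
        rw [hinit Db hDbpos] at hmpos
        linarith
      · exact h
    -- the maximizer is not on the left edge
    have hDbd : d < Db := by
      rcases eq_or_lt_of_le hDb1 with h | h
      · exfalso
        have hE₂pos : 0 < E₂ Db tb := S₂.pos Db tb hDbpos htb1
        have hanti := hanti₁ d hd
        have hdec : E₁ d tb < E₁ d 0 := hanti (mem_Ici.2 le_rfl) (mem_Ici.2 htb1) htbpos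
        rw [← h] at hmpos hm hE₂pos
        have : E₁ Δ₀ t₀ - E₂ Δ₀ t₀ < ε := by
          calc E₁ Δ₀ t₀ - E₂ Δ₀ t₀ ≤ E₁ d tb - E₂ d tb := hm
          _ < E₁ d tb := by linarith
          _ < E₁ d 0 := hdec
          _ < ε := hE0ε
        linarith
      · exact h
    -- one-sided derivative signs at the maximizer
    have hbt : 0 ≤ Et₁ Db tb - Et₂ Db tb := by
      apply aux_deriv_nonneg_of_max_left htbpos
        ((S₁.dt Db tb hDbpos htb1).sub (S₂.dt Db tb hDbpos htb1))
      intro s hs0 hst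
      exact hmax (⟨⟨hDb1, hDb2⟩, ⟨hs0, hst.le.trans htb2⟩⟩ : (⟨Db, s⟩ : ℝ × ℝ) ∈ R)
    have hbD : 0 ≤ ED₁ Db tb - ED₂ Db tb := by
      apply aux_deriv_nonneg_of_max_left hDbd
        ((S₁.dD Db tb hDbpos htb1).sub (S₂.dD Db tb hDbpos htb1))
      intro x hx0 hxΔ
      exact hmax (⟨⟨hx0, hxΔ.le.trans hDb2⟩, ⟨htb1, htb2⟩⟩ : (⟨x, tb⟩ : ℝ × ℝ) ∈ R)
    -- algebraic contradiction via the PDE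
    have hE₂pos : 0 < E₂ Db tb := S₂.pos Db tb hDbpos htb1
    have hP₂pos : 0 < Db + E₂ Db tb := by linarith
    have hP₁₂ : Db + E₂ Db tb < Db + E₁ Db tb := by linarith
    have hb₁ : Et₁ Db tb < 0 := hEt₁neg Db tb hDbpos htb1
    have hb₂ : Et₂ Db tb < 0 := hEt₂neg Db tb hDbpos htb1
    have hb₂₁ : Et₂ Db tb ≤ Et₁ Db tb := by linarith
    have hED₁eq := S₁.ED_eq hα hDbpos htb1
    have hED₂eq := S₂.ED_eq hα hDbpos htb1
    have hsq : (Db + E₂ Db tb)^2 < (Db + E₁ Db tb)^2 := by nlinarith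
    have hsq₂ : (0:ℝ) < (Db + E₂ Db tb)^2 := by positivity
    have h5 : ED₁ Db tb < α * (-Et₁ Db tb) / (Db + E₂ Db tb)^2 := by
      rw [hED₁eq]
      exact (div_lt_div_iff_of_pos_left (by nlinarith) (by nlinarith) hsq₂).2 hsq
    have h6 : α * (-Et₁ Db tb) / (Db + E₂ Db tb)^2 ≤ α * (-Et₂ Db tb) / (Db + E₂ Db tb)^2 := by
      apply (div_le_div_iff_of_pos_right hsq₂).2
      nlinarith
    rw [← hED₂eq] at h6
    linarith
  by_contra hfin
  push_neg at hfin
  have := key ((E₁ Δ₀ t₀ - E₂ Δ₀ t₀)/2) (by linarith)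
  linarith

/-- Uniqueness of the solution of the I-MMSE PDE (Lemma A.3): two C¹ solutions
with the same initial data, whose domain is covered by the characteristic
curves, coincide. -/
theorem stmt_5 (α : ℝ) (E₁ E₂ Et₁ ED₁ Et₂ ED₂ : ℝ → ℝ → ℝ)
    (hα : 0 < α)
    (hpos₁ : ∀ Δ t, 0 < Δ → 0 ≤ t → 0 < E₁ Δ t)
    (hpos₂ : ∀ Δ t, 0 < Δ → 0 ≤ t → 0 < E₂ Δ t)
    (hEt₁ : ∀ Δ t, 0 < Δ → 0 ≤ t → HasDerivAt (fun s => E₁ Δ s) (Et₁ Δ t) t)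
    (hED₁ : ∀ Δ t, 0 < Δ → 0 ≤ t → HasDerivAt (fun d => E₁ d t) (ED₁ Δ t) Δ)
    (hEt₂ : ∀ Δ t, 0 < Δ → 0 ≤ t → HasDerivAt (fun s => E₂ Δ s) (Et₂ Δ t) t)
    (hED₂ : ∀ Δ t, 0 < Δ → 0 ≤ t → HasDerivAt (fun d => E₂ d t) (ED₂ Δ t) Δ)
    (hPDE₁ : ∀ Δ t, 0 < Δ → 0 ≤ t →
      α * Et₁ Δ t / (Δ + E₁ Δ t) ^ 2 = - ED₁ Δ t)
    (hPDE₂ : ∀ Δ t, 0 < Δ → 0 ≤ t →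
      α * Et₂ Δ t / (Δ + E₂ Δ t) ^ 2 = - ED₂ Δ t)
    (hEt₁_ne : ∀ Δ t, 0 < Δ → 0 ≤ t → Et₁ Δ t ≠ 0)
    (hEt₂_ne : ∀ Δ t, 0 < Δ → 0 ≤ t → Et₂ Δ t ≠ 0)
    (hinit : ∀ Δ : ℝ, 0 < Δ → E₁ Δ 0 = E₂ Δ 0)
    (hcover : ∀ Δ t, 0 < Δ → 0 ≤ t → ∃ d : ℝ, 0 < d ∧
      (∀ s ∈ Set.Icc 0 t,
        s < α / (d + E₁ d 0) ∧
        0 < α / (α / (d + E₁ d 0) - s) - E₁ d 0) ∧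
      Δ = α / (α / (d + E₁ d 0) - t) - E₁ d 0) :
    ∀ Δ t, 0 < Δ → 0 ≤ t → E₁ Δ t = E₂ Δ t := by
  have S₁ : PDESol α E₁ Et₁ ED₁ := ⟨hpos₁, hEt₁, hED₁, hPDE₁, hEt₁_ne⟩
  have S₂ : PDESol α E₂ Et₂ ED₂ := ⟨hpos₂, hEt₂, hED₂, hPDE₂, hEt₂_ne⟩
  have hcov₁ := aux_cover_small α E₁ hα (fun d hd => hpos₁ d 0 hd le_rfl) hcover
  have hcov₂ : ∀ μ : ℝ, 0 < μ → ∃ d, 0 < d ∧ d + E₂ d 0 < μ := by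
    intro μ hμ
    obtain ⟨d, hd, hs⟩ := hcov₁ μ hμ
    exact ⟨d, hd, by rwa [hinit d hd] at hs⟩
  have hinit' : ∀ Δ : ℝ, 0 < Δ → E₂ Δ 0 = E₁ Δ 0 := fun Δ hΔ => (hinit Δ hΔ).symm
  intro Δ t hΔ ht
  exact le_antisymm
    (aux_core α E₁ E₂ Et₁ ED₁ Et₂ ED₂ hα S₁ S₂ hinit hcov₁ Δ t hΔ ht)
    (aux_core α E₂ E₁ Et₂ ED₂ Et₁ ED₁ hα S₂ S₁ hinit' hcov₂ Δ t hΔ ht)
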